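/- Let n ≥ m ≥ 1 and let A be an m × n nonnegative real matrix with entries at most c. Then ‖A‖_{S_1} ≤ (m + √m)√n · c / 2. -/

import Mathlib

open Finset

/-- Singular values (unsorted) of a complex matrix: square roots of eigenvalues of `A * Aᴴ`. -/
noncomputable def svalC {m n : ℕ} (A : Matrix (Fin m) (Fin n) ℂ) : Fin m → ℝ :=
  fun i => Real.sqrt ((Matrix.isHermitian_mul_conjTranspose_self A).eigenvalues i)

/-- Singular values of a complex matrix sorted in decreasing order. -/
noncomputable def svalCSorted {m n : ℕ} (A : Matrix (Fin m) (Fin n) ℂ) : Fin m → ℝ :=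
  svalC A ∘ ⇑(Tuple.sort (fun i => -(svalC A i)))

/-- Singular values (unsorted) of a real matrix. -/
noncomputable def svalR {m n : ℕ} (A : Matrix (Fin m) (Fin n) ℝ) : Fin m → ℝ :=
  fun i => Real.sqrt ((Matrix.isHermitian_mul_conjTranspose_self A).eigenvalues i)

/-- Singular values of a real matrix sorted in decreasing order. -/
noncomputable def svalRSorted {m n : ℕ} (A : Matrix (Fin m) (Fin n) ℝ) : Fin m → ℝ :=
  svalR A ∘ ⇑(Tuple.sort (fun i => -(svalR A i)))

/-- Ky Fan `k`-norm of a complex matrix: the sum of its `k` largest singular values. -/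
noncomputable def kyFanC {m n : ℕ} (A : Matrix (Fin m) (Fin n) ℂ) (k : ℕ) : ℝ :=
  ∑ i : Fin m, if (i : ℕ) < k then svalCSorted A i else 0

/-- Ky Fan `k`-norm of a real matrix. -/
noncomputable def kyFanR {m n : ℕ} (A : Matrix (Fin m) (Fin n) ℝ) (k : ℕ) : ℝ :=
  ∑ i : Fin m, if (i : ℕ) < k then svalRSorted A i else 0

/-- The adjacency matrix of a simple graph is Hermitian (over `ℝ`). -/
lemma adjHerm {n : ℕ} (G : SimpleGraph (Fin n)) [DecidableRel G.Adj] :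
    (G.adjMatrix ℝ).IsHermitian := by
  have h := G.isSymm_adjMatrix (α := ℝ)
  simpa [Matrix.IsHermitian, Matrix.conjTranspose, Matrix.IsSymm, Matrix.transpose, Matrix.map, conj_trivial] using h

/-- Singular values of a graph (unsorted). -/
noncomputable def gsval {n : ℕ} (G : SimpleGraph (Fin n)) [DecidableRel G.Adj] : Fin n → ℝ :=
  svalR (G.adjMatrix ℝ)

/-- Singular values of a graph sorted in decreasing order. -/
noncomputable def gsvalSorted {n : ℕ} (G : SimpleGraph (Fin n)) [DecidableRel G.Adj] : Fin n → ℝ :=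
  svalRSorted (G.adjMatrix ℝ)

/-- Eigenvalues of a graph sorted in decreasing order: `geigSorted G 0 = μ₁ ≥ ⋯ ≥ μₙ`. -/
noncomputable def geigSorted {n : ℕ} (G : SimpleGraph (Fin n)) [DecidableRel G.Adj] : Fin n → ℝ :=
  (adjHerm G).eigenvalues ∘ ⇑(Tuple.sort (fun i => -((adjHerm G).eigenvalues i)))

/-- Ky Fan `k`-norm of a graph. -/
noncomputable def kyFanG {n : ℕ} (G : SimpleGraph (Fin n)) [DecidableRel G.Adj] (k : ℕ) : ℝ :=
  kyFanR (G.adjMatrix ℝ) k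

set_option maxHeartbeats 1000000
open Matrix

lemma key_ineq (a b c s t u : ℝ) (ha : 1 ≤ a) (hab : a ≤ b) (hc : 0 ≤ c)
    (hs : 0 ≤ s) (ht : 0 ≤ t) (hu : 0 ≤ u)
    (h1 : u ^ 2 ≤ (a ^ 2 - 1) * (c * s - t ^ 2))
    (h2 : s ≤ t * a * b) (h3 : s ≤ a ^ 2 * b ^ 2 * c) (h4 : t ^ 2 ≤ c * s) :
    t + u ≤ (a ^ 2 + a) * b * c / 2 := by
  have hb : (1:ℝ) ≤ b := le_trans ha hab
  set B : ℝ := (a ^ 2 + a) * b * c / 2 with hB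
  have htab : t ≤ a * b * c := by
    have h : t ^ 2 ≤ (a * b * c) ^ 2 := by nlinarith
    exact (pow_le_pow_iff_left₀ ht (by positivity) two_ne_zero).mp h
  have htB : t ≤ B := by
    calc t ≤ a * b * c := htab
    _ ≤ B := by rw [hB]; nlinarith
  rcases le_or_gt (4 * s) ((a+1)^2 * b^2 * c) with hcase | hcase
  · -- small s case : (t+u)^2 ≤ a^2 * c * s ≤ B^2
    rcases eq_or_lt_of_le ha with heq | hlt
    · -- a = 1 : u = 0
      rw [← heq] at h1
      have hu0 : u = 0 := by nlinarith
      rw [hu0, add_zero, hB, ← heq]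
      nlinarith [sq_nonneg (t - b*c)]
    · have ha2 : 0 < a^2 - 1 := by nlinarith
      have h5 : (a^2 - 1) * (t + u)^2 ≤ a^2 * ((a^2-1) * t^2 + u^2) := by
        nlinarith [sq_nonneg (u - (a^2-1)*t)]
      have h6 : (a^2-1) * t^2 + u^2 ≤ (a^2-1) * (c*s) := by nlinarith
      have h7 : (t+u)^2 ≤ a^2 * (c*s) := by nlinarith
      have h8 : (t+u)^2 ≤ B^2 := by
        rw [hB]
        have h := mul_le_mul_of_nonneg_left hcase (show (0:ℝ) ≤ c*a^2/4 by positivity)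
        nlinarith [h]
      have hB0 : 0 ≤ B := by rw [hB]; positivity
      exact (pow_le_pow_iff_left₀ (by linarith) hB0 two_ne_zero).mp h8
  · -- large s case
    have hfact : (a*b)^2 * (a^2*t^2 - 2*B*t + B^2 - (a^2-1)*(c*s))
        = (t*a*b - s)*(a^2*(t*a*b+s) - 2*B*(a*b)) + (a*(2*s - a*(a+1)*b^2*c)/2)^2 := by
      rw [hB]; ring
    have key1 : 0 ≤ (t*a*b - s)*(a^2*(t*a*b+s) - 2*B*(a*b)) := by
      apply mul_nonneg (by nlinarith)
      rw [hB]; nlinarith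
    have hq : 0 ≤ a^2*t^2 - 2*B*t + B^2 - (a^2-1)*(c*s) := by
      have hab2 : (0:ℝ) < (a*b)^2 := by positivity
      nlinarith [sq_nonneg (a*(2*s - a*(a+1)*b^2*c)/2)]
    have h9 : u^2 ≤ (B - t)^2 := by nlinarith
    have := (pow_le_pow_iff_left₀ hu (by linarith) two_ne_zero).mp h9
    linarith

lemma sum_eig_eq_trace {k : ℕ} {H : Matrix (Fin k) (Fin k) ℝ} (hH : H.IsHermitian) :
    ∑ i, hH.eigenvalues i = Matrix.trace H := by
  conv_rhs => rw [hH.spectral_theorem, Unitary.conjStarAlgAut_apply]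
  rw [Matrix.trace_mul_cycle]
  have h1 : (star (hH.eigenvectorUnitary : Matrix (Fin k) (Fin k) ℝ)) *
      (hH.eigenvectorUnitary : Matrix (Fin k) (Fin k) ℝ) = 1 :=
    Matrix.mem_unitaryGroup_iff'.mp hH.eigenvectorUnitary.2
  rw [h1, one_mul, Matrix.trace_diagonal]
  simp


lemma rayleigh_max {k : ℕ} {H : Matrix (Fin k) (Fin k) ℝ} (hH : H.IsHermitian)
    (x : Fin k → ℝ) (i0 : Fin k) (hmax : ∀ i, hH.eigenvalues i ≤ hH.eigenvalues i0) :
    x ⬝ᵥ (H *ᵥ x) ≤ hH.eigenvalues i0 * (x ⬝ᵥ x) := by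
  set U : Matrix (Fin k) (Fin k) ℝ := (hH.eigenvectorUnitary : Matrix (Fin k) (Fin k) ℝ) with hU
  set y : Fin k → ℝ := (star U) *ᵥ x with hy
  have hUU : U * star U = 1 := Matrix.mem_unitaryGroup_iff.mp hH.eigenvectorUnitary.2
  have hx_vecMul : x ᵥ* U = y := by
    rw [hy, Matrix.star_eq_conjTranspose]
    have h : Uᴴ = Uᵀ := by ext i j; simp [Matrix.conjTranspose_apply]
    rw [h, Matrix.mulVec_transpose]
  have h1 : x ⬝ᵥ (H *ᵥ x) = ∑ i, hH.eigenvalues i * (y i)^2 := by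
    conv_lhs => rw [hH.spectral_theorem, Unitary.conjStarAlgAut_apply]
    rw [← Matrix.mulVec_mulVec, ← Matrix.mulVec_mulVec, Matrix.dotProduct_mulVec, hx_vecMul]
    simp only [dotProduct, Matrix.mulVec_diagonal, Function.comp_apply,
      RCLike.ofReal_real_eq_id, id_eq]
    congr 1; funext i; ring
  have h2 : x ⬝ᵥ x = ∑ i, (y i)^2 := by
    have : x ⬝ᵥ ((U * star U) *ᵥ x) = y ⬝ᵥ y := by
      rw [← Matrix.mulVec_mulVec, Matrix.dotProduct_mulVec, hx_vecMul]
    rw [hUU] at this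
    simp only [Matrix.one_mulVec] at this
    rw [this, dotProduct]
    simp [pow_two]
  rw [h1, h2, Finset.mul_sum]
  exact Finset.sum_le_sum fun i _ => mul_le_mul_of_nonneg_right (hmax i) (sq_nonneg _)

/-- Koolen–Moulton bound for nonnegative matrices: `‖A‖_{S_1} ≤ (m + √m)√n · c / 2`. -/
theorem trace_norm_le_absolute {m n : ℕ} (hm : 1 ≤ m) (hmn : m ≤ n)
    (A : Matrix (Fin m) (Fin n) ℝ) (c : ℝ) (hA : ∀ i j, 0 ≤ A i j) (hc : ∀ i j, A i j ≤ c) :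
    ∑ i, svalR A i ≤ ((m : ℝ) + Real.sqrt m) * Real.sqrt n * c / 2 := by
  classical
  have hH := Matrix.isHermitian_mul_conjTranspose_self A
  set lam : Fin m → ℝ := hH.eigenvalues with hlam
  have hlam0 : ∀ i, 0 ≤ lam i := fun i =>
    Matrix.eigenvalues_self_mul_conjTranspose_nonneg A i
  have hσ : ∀ i, svalR A i = Real.sqrt (lam i) := fun i => rfl
  have hσ0 : ∀ i, 0 ≤ svalR A i := fun i => Real.sqrt_nonneg _
  have hσsq : ∀ i, (svalR A i)^2 = lam i := fun i => by
    rw [hσ i, Real.sq_sqrt (hlam0 i)]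
  -- entry sum and Frobenius
  set s : ℝ := ∑ i, ∑ j, A i j with hs_def
  have hs0 : 0 ≤ s := Finset.sum_nonneg fun i _ => Finset.sum_nonneg fun j _ => hA i j
  have hc0 : 0 ≤ c := le_trans (hA ⟨0, hm⟩ ⟨0, lt_of_lt_of_le hm hmn⟩)
    (hc ⟨0, hm⟩ ⟨0, lt_of_lt_of_le hm hmn⟩)
  -- trace identity
  have htrace : ∑ i, lam i = ∑ i, ∑ j, (A i j)^2 := by
    rw [hlam, sum_eig_eq_trace hH, Matrix.trace]
    congr 1; funext i
    simp [Matrix.diag, Matrix.mul_apply, Matrix.conjTranspose_apply, pow_two]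
  have hF2cs : ∑ i, ∑ j, (A i j)^2 ≤ c * s := by
    rw [hs_def, Finset.mul_sum]
    refine Finset.sum_le_sum fun i _ => ?_
    rw [Finset.mul_sum]
    exact Finset.sum_le_sum fun j _ => by nlinarith [hA i j, hc i j]
  have hsmnc : s ≤ (m:ℝ) * n * c := by
    calc s ≤ ∑ i : Fin m, ∑ j : Fin n, c :=
      Finset.sum_le_sum fun i _ => Finset.sum_le_sum fun j _ => hc i j
    _ = (m:ℝ) * n * c := by simp; ring
  -- max singular value
  obtain ⟨i0, -, hi0⟩ := Finset.exists_max_image Finset.univ (svalR A) ⟨⟨0, hm⟩, Finset.mem_univ _⟩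
  set t : ℝ := svalR A i0 with ht_def
  have hmaxlam : ∀ i, lam i ≤ lam i0 := fun i => by
    rw [← hσsq i, ← hσsq i0]
    exact pow_le_pow_left₀ (hσ0 i) (hi0 i (Finset.mem_univ i)) 2
  -- Rayleigh with all-ones vector
  have hray := rayleigh_max hH (fun _ => (1:ℝ)) i0 hmaxlam
  have hray1 : (fun _ => (1:ℝ)) ⬝ᵥ ((A * Aᴴ) *ᵥ fun _ => (1:ℝ)) = ∑ j, (∑ i, A i j)^2 := by
    simp only [dotProduct, Matrix.mulVec, Matrix.mul_apply, Matrix.conjTranspose_apply,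
      mul_one, one_mul, star_trivial]
    have e1 : ∀ i : Fin m, ∑ i' : Fin m, ∑ j, A i j * A i' j
        = ∑ j, ∑ i' : Fin m, A i j * A i' j := fun i => Finset.sum_comm
    simp_rw [e1]
    rw [Finset.sum_comm]
    refine Finset.sum_congr rfl fun j _ => ?_
    rw [sq, Finset.sum_mul_sum]
  have hray2 : (fun _ => (1:ℝ)) ⬝ᵥ (fun _ => (1:ℝ) : Fin m → ℝ) = (m:ℝ) := by
    simp [dotProduct]
  have hCS : s^2 ≤ (n:ℝ) * ∑ j, (∑ i, A i j)^2 := by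
    have h := sq_sum_le_card_mul_sum_sq (s := (Finset.univ : Finset (Fin n)))
      (f := fun j => ∑ i, A i j)
    rw [hs_def, show (∑ i, ∑ j, A i j) = ∑ j, ∑ i, A i j from Finset.sum_comm]
    simpa using h
  have hst : s^2 ≤ (m:ℝ) * n * t^2 := by
    rw [hσsq i0] at *
    calc s^2 ≤ (n:ℝ) * ∑ j, (∑ i, A i j)^2 := hCS
    _ ≤ (n:ℝ) * (lam i0 * m) := by
        apply mul_le_mul_of_nonneg_left _ (Nat.cast_nonneg n)
        rw [← hray1, ← hray2]; exact hray
    _ = (m:ℝ) * n * lam i0 := by ring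
  -- Cauchy-Schwarz on the rest
  set u : ℝ := ∑ i ∈ Finset.univ.erase i0, svalR A i with hu_def
  have hu0 : 0 ≤ u := Finset.sum_nonneg fun i _ => hσ0 i
  have hsplit : ∑ i, svalR A i = t + u := by
    rw [hu_def, ht_def, Finset.add_sum_erase _ _ (Finset.mem_univ i0)]
  have hsumσ : ∑ i, (svalR A i)^2 = ∑ i, lam i := Finset.sum_congr rfl fun i _ => hσsq i
  have hsplit2 : ∑ i ∈ Finset.univ.erase i0, (svalR A i)^2 = (∑ i, lam i) - t^2 := by
    rw [ht_def, eq_sub_iff_add_eq, add_comm, ← hsumσ,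
      Finset.add_sum_erase Finset.univ (fun i => (svalR A i)^2) (Finset.mem_univ i0)]
  have hucs : u^2 ≤ ((m:ℝ) - 1) * ((∑ i, lam i) - t^2) := by
    have h := sq_sum_le_card_mul_sum_sq (s := Finset.univ.erase i0) (f := svalR A)
    rw [Finset.card_erase_of_mem (Finset.mem_univ i0), Finset.card_univ, Fintype.card_fin] at h
    have hcast : ((m - 1 : ℕ) : ℝ) = (m:ℝ) - 1 := by
      rw [Nat.cast_sub hm]; norm_num
    calc u^2 = (∑ i ∈ Finset.univ.erase i0, svalR A i)^2 := by rw [hu_def]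
    _ ≤ ((m - 1 : ℕ) : ℝ) * ∑ i ∈ Finset.univ.erase i0, (svalR A i)^2 := by exact_mod_cast h
    _ = ((m:ℝ) - 1) * ((∑ i, lam i) - t^2) := by rw [hcast, hsplit2]
  -- set a, b and conclude
  have ht0 : 0 ≤ t := hσ0 i0
  have htlam : t^2 = lam i0 := hσsq i0
  have hlamF : lam i0 ≤ ∑ i, lam i := Finset.single_le_sum (fun i _ => hlam0 i) (Finset.mem_univ i0)
  set a : ℝ := Real.sqrt m with ha_def
  set b : ℝ := Real.sqrt n with hb_def
  have ha2 : a^2 = m := Real.sq_sqrt (Nat.cast_nonneg m)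
  have hb2 : b^2 = n := Real.sq_sqrt (Nat.cast_nonneg n)
  have ha1 : 1 ≤ a := by
    rw [ha_def, show (1:ℝ) = Real.sqrt 1 by simp]
    exact Real.sqrt_le_sqrt (by exact_mod_cast hm)
  have hab : a ≤ b := Real.sqrt_le_sqrt (by exact_mod_cast hmn)
  have hm1 : (1:ℝ) ≤ (m:ℝ) := by exact_mod_cast hm
  have hlcs : ∑ i, lam i ≤ c * s := htrace ▸ hF2cs
  have hkey := key_ineq a b c s t u ha1 hab hc0 hs0 ht0 hu0
    (by
      rw [ha2]
      nlinarith [hucs, mul_nonneg (by linarith : (0:ℝ) ≤ (m:ℝ)-1)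
        (by linarith : (0:ℝ) ≤ c*s - ∑ i, lam i)])
    (by
      have : s^2 ≤ (t*a*b)^2 := by rw [mul_pow, mul_pow, ha2, hb2]; nlinarith [hst]
      exact (pow_le_pow_iff_left₀ hs0 (by positivity) two_ne_zero).mp this)
    (by rw [ha2, hb2]; nlinarith [hsmnc])
    (by rw [htlam]; linarith [hlamF, hlcs])
  rw [hsplit]
  calc t + u ≤ (a^2 + a) * b * c / 2 := hkey
  _ = ((m : ℝ) + Real.sqrt m) * Real.sqrt n * c / 2 := by rw [ha2]
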